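/- Let α ∈ (0,2], c > 0, p ≥ 2, and let (a_j)_{j≥0} be nonnegative numbers. Then ∫₀^T (Σ_{j=0}^∞ e^{−c2^{αj}t} 2^{2βj} a_j²)^{p/2} dt ≤ C Σ_{j=0}^∞ 2^{−αj} 2^{pβj} a_j^p, for a constant C = C(α, β, p, c) independent of (a_j) and T. -/

import Mathlib

open MeasureTheory Set Real
open scoped ENNReal
set_option maxHeartbeats 1600000
set_option linter.unusedVariables false


private lemma exp_neg_le_inv {x : ℝ} (hx : 0 < x) : Real.exp (-x) ≤ x⁻¹ := by
  rw [Real.exp_neg]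
  have h1 : x ≤ Real.exp x := by linarith [Real.add_one_le_exp x]
  exact inv_anti₀ hx h1

private lemma lemA (α κ c : ℝ) (hα : 0 < α) (hκ : 0 < κ) (h2 : 2*κ ≤ α) (hc : 0 < c) :
    ∃ C > 0, ∀ t : ℝ, 0 < t →
      (∑' j : ℕ, ENNReal.ofReal ((2:ℝ)^(κ*(j:ℝ)) * Real.exp (-(c * (2:ℝ)^(α*(j:ℝ)) * t))))
        ≤ ENNReal.ofReal (C * t ^ (-(κ/α))) := by
  have h2pos : (0:ℝ) < 2 := two_pos
  have hρ0 : (0:ℝ) < (2:ℝ)^(κ-α) := Real.rpow_pos_of_pos h2pos _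
  have hρ1 : (2:ℝ)^(κ-α) < 1 :=
    Real.rpow_lt_one_of_one_lt_of_neg one_lt_two (by linarith)
  have hr11 : (1:ℝ) < (2:ℝ)^κ := Real.one_lt_rpow_iff_of_pos h2pos |>.mpr (Or.inl ⟨one_lt_two, hκ⟩)
  set ρ := (2:ℝ)^(κ-α) with hρdef
  set r1 := (2:ℝ)^κ with hr1def
  have h1ρ : 0 < 1 - ρ := by linarith
  have hκα : κ/α ≤ 1 := by
    rw [div_le_one hα]; linarith
  have hC0 : 0 < r1/(r1-1) + (1-ρ)⁻¹ := by
    have h4 : (0:ℝ) < r1/(r1-1) := by apply div_pos <;> linarith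
    positivity
  refine ⟨(r1/(r1-1) + (1-ρ)⁻¹) * c^(-(κ/α)), mul_pos hC0 (Real.rpow_pos_of_pos hc _), ?_⟩
  intro t ht
  set s := c*t with hsdef
  have hs0 : 0 < s := mul_pos hc ht
  set X := s ^ (-(κ/α)) with hXdef
  have hX0 : 0 < X := Real.rpow_pos_of_pos hs0 _
  have hrhs : (r1/(r1-1) + (1-ρ)⁻¹) * c^(-(κ/α)) * t ^ (-(κ/α))
      = (r1/(r1-1) + (1-ρ)⁻¹) * X := by
    rw [hXdef, hsdef, Real.mul_rpow hc.le ht.le]; ring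
  rw [hrhs]
  -- rewrite terms
  have hterm : ∀ j : ℕ, (2:ℝ)^(κ*(j:ℝ)) * Real.exp (-(c * (2:ℝ)^(α*(j:ℝ)) * t))
      = (2:ℝ)^(κ*(j:ℝ)) * Real.exp (-(s * (2:ℝ)^(α*(j:ℝ)))) := by
    intro j; rw [show c * (2:ℝ)^(α*(j:ℝ)) * t = s * (2:ℝ)^(α*(j:ℝ)) by rw [hsdef]; ring]
  simp only [hterm]
  set g : ℕ → ℝ := fun j => (2:ℝ)^(κ*(j:ℝ)) * Real.exp (-(s * (2:ℝ)^(α*(j:ℝ)))) with hgdef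
  have hgpos : ∀ j, 0 ≤ g j := fun j => by
    have := Real.exp_pos (-(s * (2:ℝ)^(α*(j:ℝ)))); positivity
  have hg_le2 : ∀ j : ℕ, g j ≤ s⁻¹ * (2:ℝ)^((κ-α)*(j:ℝ)) := by
    intro j
    have hxpos : 0 < s * (2:ℝ)^(α*(j:ℝ)) := mul_pos hs0 (Real.rpow_pos_of_pos h2pos _)
    have h1 := exp_neg_le_inv hxpos
    have h2' : (0:ℝ) ≤ (2:ℝ)^(κ*(j:ℝ)) := (Real.rpow_pos_of_pos h2pos _).le
    calc g j ≤ (2:ℝ)^(κ*(j:ℝ)) * (s * (2:ℝ)^(α*(j:ℝ)))⁻¹ :=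
          mul_le_mul_of_nonneg_left h1 h2'
      _ = s⁻¹ * (2:ℝ)^((κ-α)*(j:ℝ)) := by
          rw [mul_inv, ← Real.rpow_neg h2pos.le, ← mul_assoc,
            mul_comm ((2:ℝ)^(κ*(j:ℝ))), mul_assoc, ← Real.rpow_add h2pos,
            show κ*(j:ℝ) + -(α*(j:ℝ)) = (κ-α)*(j:ℝ) by ring]
  have hg_le1 : ∀ j : ℕ, g j ≤ (2:ℝ)^(κ*(j:ℝ)) := by
    intro j
    have h2' : (0:ℝ) ≤ (2:ℝ)^(κ*(j:ℝ)) := (Real.rpow_pos_of_pos h2pos _).le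
    have he : Real.exp (-(s * (2:ℝ)^(α*(j:ℝ)))) ≤ 1 := by
      rw [Real.exp_le_one_iff]
      have : 0 < s * (2:ℝ)^(α*(j:ℝ)) := mul_pos hs0 (Real.rpow_pos_of_pos h2pos _)
      linarith
    calc g j ≤ (2:ℝ)^(κ*(j:ℝ)) * 1 := mul_le_mul_of_nonneg_left he h2'
      _ = _ := mul_one _
  -- geometric facts
  have hgeom : ∀ j : ℕ, (2:ℝ)^((κ-α)*(j:ℝ)) = ρ^j := by
    intro j
    rw [hρdef, ← Real.rpow_natCast ((2:ℝ)^(κ-α)) j, ← Real.rpow_mul h2pos.le]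
  have hgeom1 : ∀ j : ℕ, (2:ℝ)^(κ*(j:ℝ)) = r1^j := by
    intro j
    rw [hr1def, ← Real.rpow_natCast ((2:ℝ)^κ) j, ← Real.rpow_mul h2pos.le]
  rcases le_or_gt s 1 with hs1 | hs1
  · -- small s
    have hsinv1 : (1:ℝ) ≤ s⁻¹ := (one_le_inv₀ hs0).mpr hs1
    have hlogb0 : 0 ≤ Real.logb 2 s⁻¹ := Real.logb_nonneg one_lt_two hsinv1
    set L := Real.logb 2 s⁻¹ / α with hLdef
    have hL0 : 0 ≤ L := div_nonneg hlogb0 hα.le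
    set N := ⌊L⌋₊ with hNdef
    have hNle : (N:ℝ) ≤ L := Nat.floor_le hL0
    have hNgt : L < (N:ℝ) + 1 := Nat.lt_floor_add_one L
    have key1 : (2:ℝ)^(α*(N:ℝ)) ≤ s⁻¹ := by
      have h' : α*(N:ℝ) ≤ Real.logb 2 s⁻¹ := by
        rw [hLdef] at hNle
        calc α*(N:ℝ) ≤ α * L := by nlinarith
          _ = Real.logb 2 s⁻¹ := by rw [hLdef]; field_simp
      calc (2:ℝ)^(α*(N:ℝ)) ≤ (2:ℝ)^(Real.logb 2 s⁻¹) :=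
            Real.rpow_le_rpow_of_exponent_le one_le_two h'
        _ = s⁻¹ := Real.rpow_logb h2pos (by norm_num) (inv_pos.mpr hs0)
    have key2 : s⁻¹ ≤ (2:ℝ)^(α*((N:ℝ)+1)) := by
      have h' : Real.logb 2 s⁻¹ ≤ α*((N:ℝ)+1) := by
        have : L ≤ (N:ℝ)+1 := hNgt.le
        calc Real.logb 2 s⁻¹ = α * L := by rw [hLdef]; field_simp
          _ ≤ α*((N:ℝ)+1) := by nlinarith
      calc s⁻¹ = (2:ℝ)^(Real.logb 2 s⁻¹) :=
            (Real.rpow_logb h2pos (by norm_num) (inv_pos.mpr hs0)).symm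
        _ ≤ _ := Real.rpow_le_rpow_of_exponent_le one_le_two h'
    have headbound : (2:ℝ)^(κ*(N:ℝ)) ≤ X := by
      have e1 : (2:ℝ)^(κ*(N:ℝ)) = ((2:ℝ)^(α*(N:ℝ)))^(κ/α) := by
        rw [← Real.rpow_mul h2pos.le, show α*(N:ℝ)*(κ/α) = κ*(N:ℝ) by field_simp]
      rw [e1, hXdef]
      calc ((2:ℝ)^(α*(N:ℝ)))^(κ/α) ≤ (s⁻¹)^(κ/α) :=
            Real.rpow_le_rpow (Real.rpow_pos_of_pos h2pos _).le key1 (by positivity)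
        _ = s ^ (-(κ/α)) := by rw [Real.inv_rpow hs0.le, ← Real.rpow_neg hs0.le]
    have tailbound : (2:ℝ)^((κ-α)*((N:ℝ)+1)) ≤ s^(1-κ/α) := by
      have e1 : (2:ℝ)^((κ-α)*((N:ℝ)+1)) = ((2:ℝ)^(α*((N:ℝ)+1)))^((κ-α)/α) := by
        rw [← Real.rpow_mul h2pos.le, show α*((N:ℝ)+1)*((κ-α)/α) = (κ-α)*((N:ℝ)+1) by
          field_simp]
      rw [e1]
      calc ((2:ℝ)^(α*((N:ℝ)+1)))^((κ-α)/α) ≤ (s⁻¹)^((κ-α)/α) :=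
            Real.rpow_le_rpow_of_nonpos (inv_pos.mpr hs0) key2
              (by apply div_nonpos_of_nonpos_of_nonneg <;> linarith)
        _ = s^(1-κ/α) := by
            rw [Real.inv_rpow hs0.le, ← Real.rpow_neg hs0.le,
              show -((κ-α)/α) = 1-κ/α by field_simp; ring]
    rw [← Summable.sum_add_tsum_nat_add' (f := fun j : ℕ => ENNReal.ofReal (g j)) (k := N+1) ENNReal.summable]
    have h4 : (0:ℝ) < r1/(r1-1) := by apply div_pos <;> linarith
    have head : (∑ j ∈ Finset.range (N+1), ENNReal.ofReal (g j))
        ≤ ENNReal.ofReal ((r1/(r1-1)) * X) := by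
      calc ∑ j ∈ Finset.range (N+1), ENNReal.ofReal (g j)
          ≤ ∑ j ∈ Finset.range (N+1), ENNReal.ofReal (r1^j) :=
            Finset.sum_le_sum fun j _ => ENNReal.ofReal_le_ofReal
              (by rw [← hgeom1 j]; exact hg_le1 j)
        _ = ENNReal.ofReal (∑ j ∈ Finset.range (N+1), r1^j) :=
            (ENNReal.ofReal_sum_of_nonneg fun j _ => by positivity).symm
        _ ≤ ENNReal.ofReal ((r1/(r1-1)) * X) := by
            apply ENNReal.ofReal_le_ofReal
            rw [geom_sum_eq (by linarith : r1 ≠ 1), div_le_iff₀ (by linarith : (0:ℝ) < r1 - 1)]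
            have hr1N : r1^N ≤ X := by rw [← hgeom1 N]; exact headbound
            have hr1pos : (0:ℝ) < r1 := by linarith
            calc r1^(N+1) - 1 ≤ r1^(N+1) := by linarith
              _ = r1 * r1^N := by ring
              _ ≤ r1 * X := by nlinarith [pow_pos hr1pos N]
              _ = r1/(r1-1) * X * (r1-1) := by
                  have hne : r1 - 1 ≠ 0 := by linarith
                  rw [div_mul_eq_mul_div, div_mul_eq_mul_div, mul_div_assoc, div_self hne, mul_one]
    have tail : (∑' j : ℕ, ENNReal.ofReal (g (j + (N+1))))
        ≤ ENNReal.ofReal ((1-ρ)⁻¹ * X) := by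
      have hA : s⁻¹ * (2:ℝ)^((κ-α)*((N:ℝ)+1)) ≤ X := by
        calc s⁻¹ * (2:ℝ)^((κ-α)*((N:ℝ)+1)) ≤ s⁻¹ * s^(1-κ/α) :=
              mul_le_mul_of_nonneg_left tailbound (by positivity)
          _ = X := by
              rw [hXdef, ← Real.rpow_neg_one s, ← Real.rpow_add hs0,
                show (-1) + (1-κ/α) = -(κ/α) by ring]
      calc (∑' j : ℕ, ENNReal.ofReal (g (j + (N+1))))
          ≤ ∑' j : ℕ, ENNReal.ofReal ((s⁻¹ * (2:ℝ)^((κ-α)*((N:ℝ)+1))) * ρ^j) := by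
            refine ENNReal.tsum_le_tsum fun j => ENNReal.ofReal_le_ofReal ?_
            have h1 := hg_le2 (j + (N+1))
            have e : (2:ℝ)^((κ-α)*(((j + (N+1) : ℕ)):ℝ)) = (2:ℝ)^((κ-α)*((N:ℝ)+1)) * ρ^j := by
              rw [← hgeom j, ← Real.rpow_add h2pos]
              congr 1
              push_cast
              ring
            calc g (j+(N+1)) ≤ s⁻¹ * (2:ℝ)^((κ-α)*(((j + (N+1):ℕ)):ℝ)) := h1
              _ = (s⁻¹ * (2:ℝ)^((κ-α)*((N:ℝ)+1))) * ρ^j := by rw [e]; ring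
        _ = ENNReal.ofReal ((s⁻¹ * (2:ℝ)^((κ-α)*((N:ℝ)+1))) * (1-ρ)⁻¹) := by
            rw [← ENNReal.ofReal_tsum_of_nonneg (fun j => by positivity)
              ((summable_geometric_of_lt_one hρ0.le hρ1).mul_left _),
              tsum_mul_left, tsum_geometric_of_lt_one hρ0.le hρ1]
        _ ≤ ENNReal.ofReal ((1-ρ)⁻¹ * X) := by
            apply ENNReal.ofReal_le_ofReal
            have h3 : (0:ℝ) ≤ (1-ρ)⁻¹ := by positivity
            have h5 : (0:ℝ) ≤ s⁻¹ * (2:ℝ)^((κ-α)*((N:ℝ)+1)) := by positivity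
            nlinarith
    refine le_trans (add_le_add head tail) ?_
    rw [← ENNReal.ofReal_add (by positivity) (by positivity)]
    exact ENNReal.ofReal_le_ofReal (le_of_eq (by ring))
  · -- large s
    calc (∑' j : ℕ, ENNReal.ofReal (g j))
        ≤ ∑' j : ℕ, ENNReal.ofReal (s⁻¹ * ρ^j) := by
          refine ENNReal.tsum_le_tsum fun j => ENNReal.ofReal_le_ofReal ?_
          rw [← hgeom j]; exact hg_le2 j
      _ = ENNReal.ofReal (∑' j : ℕ, s⁻¹ * ρ^j) := by
          rw [ENNReal.ofReal_tsum_of_nonneg (fun j => by positivity)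
            ((summable_geometric_of_lt_one hρ0.le hρ1).mul_left _)]
      _ ≤ ENNReal.ofReal ((r1/(r1-1) + (1-ρ)⁻¹) * X) := by
          apply ENNReal.ofReal_le_ofReal
          rw [tsum_mul_left, tsum_geometric_of_lt_one hρ0.le hρ1]
          have hXge : s⁻¹ ≤ X := by
            rw [hXdef, ← Real.rpow_neg_one s]
            exact Real.rpow_le_rpow_of_exponent_le hs1.le (by linarith)
          have h3 : (0:ℝ) < (1-ρ)⁻¹ := by positivity
          have h4 : (0:ℝ) < r1/(r1-1) := by
            apply div_pos <;> linarith
          nlinarith [inv_pos.mpr hs0]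

private lemma holder_step {q q' : ℝ} (hqq' : q.HolderConjugate q') (U V : ℕ → ℝ≥0∞) :
    (∑' j, U j * V j) ^ q ≤ (∑' j, U j ^ q) * (∑' j, V j ^ q') ^ (q-1) := by
  have h := ENNReal.lintegral_mul_le_Lp_mul_Lq Measure.count hqq'
    (Measurable.of_discrete (f := U)).aemeasurable
    (Measurable.of_discrete (f := V)).aemeasurable
  simp only [Pi.mul_apply, lintegral_count] at h
  have hq0 : (0:ℝ) ≤ q := hqq'.nonneg
  calc (∑' j, U j * V j) ^ q
      ≤ ((∑' j, U j ^ q) ^ (1/q) * (∑' j, V j ^ q') ^ (1/q')) ^ q :=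
        ENNReal.rpow_le_rpow h hq0
    _ = (∑' j, U j ^ q) ^ ((1/q)*q) * (∑' j, V j ^ q') ^ ((1/q')*q) := by
        rw [ENNReal.mul_rpow_of_nonneg _ _ hq0, ← ENNReal.rpow_mul, ← ENNReal.rpow_mul]
    _ = (∑' j, U j ^ q) * (∑' j, V j ^ q') ^ (q-1) := by
        rw [show (1/q)*q = 1 by rw [one_div, inv_mul_cancel₀ hqq'.ne_zero], ENNReal.rpow_one,
          show (1/q')*q = q-1 by rw [one_div, inv_mul_eq_div, hqq'.div_conj_eq_sub_one]]

section aux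

private lemma lemB' {δ b : ℝ} (hδ0 : 0 ≤ δ) (hδ1 : δ < 1) (hb : 0 < b) :
    ∫⁻ t in Set.Ioi (0:ℝ), ENNReal.ofReal (t ^ (-δ) * Real.exp (-(b * t)))
      = ENNReal.ofReal ((1/b) ^ (1-δ) * Real.Gamma (1-δ)) := by
  have hint : IntegrableOn (fun t : ℝ => t ^ (-δ) * Real.exp (-(b * t))) (Set.Ioi 0) := by
    have := integrableOn_rpow_mul_exp_neg_mul_rpow (s := -δ) (p := 1) (b := b)
      (by linarith) one_pos hb
    simpa only [Real.rpow_one, neg_mul] using this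
  rw [← ofReal_integral_eq_lintegral_ofReal hint]
  · congr 1
    rw [show -δ = (1-δ) - 1 by ring]
    exact Real.integral_rpow_mul_exp_neg_mul_Ioi (by linarith) hb
  · refine (ae_restrict_iff' measurableSet_Ioi).mpr (Filter.Eventually.of_forall fun t ht => ?_)
    have ht' : (0:ℝ) < t := ht
    positivity

end aux

/-- the key scalar inequality
`∫₀^T (Σ_j e^{-c2^{αj}t} 2^{2βj} a_j²)^{p/2} dt ≤ C Σ_j 2^{-αj} 2^{pβj} a_j^p`
with `C = C(α, β, p, c)` independent of the sequence `(a_j)` and of `T`. -/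
theorem stmt_8 (α β p c : ℝ) (hα : α ∈ Set.Ioc (0:ℝ) 2) (hp : 2 ≤ p) (hc : 0 < c) :
    ∃ C > 0, ∀ (T : ℝ) (a : ℕ → ℝ), (∀ j, 0 ≤ a j) →
      ∫⁻ t in Set.Ioc (0:ℝ) T,
          (∑' j : ℕ, ENNReal.ofReal
            (Real.exp (-(c * (2:ℝ) ^ (α * (j:ℝ)) * t)) *
              (2:ℝ) ^ (2 * β * (j:ℝ)) * (a j) ^ 2)) ^ (p/2)
        ≤ ENNReal.ofReal C *
          ∑' j : ℕ, ENNReal.ofReal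
            ((2:ℝ) ^ (-(α * (j:ℝ))) * (2:ℝ) ^ (p * β * (j:ℝ)) * a j ^ p) := by
  have hα1 : 0 < α := hα.1
  rcases eq_or_lt_of_le hp with hp2 | hp2
  · -- case p = 2
    subst hp2
    refine ⟨c⁻¹, by positivity, ?_⟩
    intro T a ha
    have hb : ∀ j : ℕ, 0 < c * (2:ℝ)^(α*(j:ℝ)) := fun j => by positivity
    have hmeas : ∀ j : ℕ, Measurable fun t : ℝ =>
        ENNReal.ofReal (Real.exp (-(c * (2:ℝ)^(α*(j:ℝ)) * t)) * (2:ℝ)^(2*β*(j:ℝ)) * a j ^ 2) :=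
      fun j => by fun_prop
    have hIj : ∀ j : ℕ, ∫⁻ t in Set.Ioi (0:ℝ),
        ENNReal.ofReal (Real.exp (-(c * (2:ℝ)^(α*(j:ℝ)) * t)) * (2:ℝ)^(2*β*(j:ℝ)) * a j ^ 2)
        = ENNReal.ofReal (c⁻¹) *
          ENNReal.ofReal ((2:ℝ)^(-(α*(j:ℝ))) * (2:ℝ)^(2*β*(j:ℝ)) * a j ^ (2:ℝ)) := by
      intro j
      have hlemB := lemB' (δ := 0) le_rfl one_pos (hb j)
      simp only [neg_zero, Real.rpow_zero, one_mul, sub_zero, Real.rpow_one,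
        Real.Gamma_one, mul_one] at hlemB
      calc ∫⁻ t in Set.Ioi (0:ℝ),
            ENNReal.ofReal (Real.exp (-(c * (2:ℝ)^(α*(j:ℝ)) * t)) * (2:ℝ)^(2*β*(j:ℝ)) * a j ^ 2)
          = ∫⁻ t in Set.Ioi (0:ℝ),
            (ENNReal.ofReal (Real.exp (-(c * (2:ℝ)^(α*(j:ℝ)) * t))) *
              ENNReal.ofReal ((2:ℝ)^(2*β*(j:ℝ)) * a j ^ 2)) := by
            refine lintegral_congr fun t => ?_
            rw [mul_assoc, ENNReal.ofReal_mul (Real.exp_pos _).le]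
        _ = ENNReal.ofReal (1/(c * (2:ℝ)^(α*(j:ℝ)))) *
              ENNReal.ofReal ((2:ℝ)^(2*β*(j:ℝ)) * a j ^ 2) := by
            rw [lintegral_mul_const' _ _ ENNReal.ofReal_ne_top, hlemB]
        _ = _ := by
            rw [← ENNReal.ofReal_mul (by positivity), ← ENNReal.ofReal_mul (by positivity)]
            congr 1
            have h2 : a j ^ (2:ℝ) = a j ^ 2 := by
              rw [show (2:ℝ) = ((2:ℕ):ℝ) by norm_num, Real.rpow_natCast]
            rw [h2, one_div, mul_inv, Real.rpow_neg (by norm_num : (0:ℝ) ≤ 2)]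
            ring
    calc ∫⁻ t in Set.Ioc (0:ℝ) T,
          (∑' j : ℕ, ENNReal.ofReal
            (Real.exp (-(c * (2:ℝ) ^ (α * (j:ℝ)) * t)) *
              (2:ℝ) ^ (2 * β * (j:ℝ)) * (a j) ^ 2)) ^ ((2:ℝ)/2)
        = ∫⁻ t in Set.Ioc (0:ℝ) T,
          (∑' j : ℕ, ENNReal.ofReal
            (Real.exp (-(c * (2:ℝ) ^ (α * (j:ℝ)) * t)) *
              (2:ℝ) ^ (2 * β * (j:ℝ)) * (a j) ^ 2)) := by
          simp only [show (2:ℝ)/2 = 1 by norm_num, ENNReal.rpow_one]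
      _ ≤ ∫⁻ t in Set.Ioi (0:ℝ),
          (∑' j : ℕ, ENNReal.ofReal
            (Real.exp (-(c * (2:ℝ) ^ (α * (j:ℝ)) * t)) *
              (2:ℝ) ^ (2 * β * (j:ℝ)) * (a j) ^ 2)) :=
          lintegral_mono_set Set.Ioc_subset_Ioi_self
      _ = ∑' j : ℕ, ∫⁻ t in Set.Ioi (0:ℝ),
          ENNReal.ofReal (Real.exp (-(c * (2:ℝ) ^ (α * (j:ℝ)) * t)) *
              (2:ℝ) ^ (2 * β * (j:ℝ)) * (a j) ^ 2) :=
          lintegral_tsum fun j => (hmeas j).aemeasurable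
      _ = ENNReal.ofReal (c⁻¹) *
          ∑' j : ℕ, ENNReal.ofReal
            ((2:ℝ) ^ (-(α * (j:ℝ))) * (2:ℝ) ^ (2 * β * (j:ℝ)) * a j ^ (2:ℝ)) := by
          rw [← ENNReal.tsum_mul_left]
          exact tsum_congr hIj
  · -- case p > 2
    set q := p/2 with hqdef
    have hq1 : 1 < q := by rw [hqdef]; linarith
    have hq0 : 0 < q := by linarith
    have hqne : q ≠ 0 := by linarith
    have hq1' : (0:ℝ) < q - 1 := by linarith
    set q' := q/(q-1) with hq'def
    have hqq' : q.HolderConjugate q' := (Real.holderConjugate_iff_eq_conjExponent hq1).mpr rfl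
    have hp0 : (0:ℝ) < p := by linarith
    set κ := α/p with hκdef
    have hκ0 : 0 < κ := div_pos hα1 hp0
    have hκ2 : 2*κ ≤ α := by
      rw [hκdef, mul_div_assoc', div_le_iff₀ hp0]
      nlinarith
    obtain ⟨CA, hCA0, hCA⟩ := lemA α κ c hα1 hκ0 hκ2 hc
    set w := κ*(q-1) with hwdef
    have hw0 : 0 < w := mul_pos hκ0 hq1'
    set δ := w/α with hδdef
    have hδ0 : 0 ≤ δ := le_of_lt (div_pos hw0 hα1)
    have hαδ : α*δ = w := by rw [hδdef]; field_simp
    have hδval : δ = (q-1)/p := by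
      rw [hδdef, hwdef, hκdef]
      field_simp
    have hδ1 : δ < 1 := by
      rw [hδval, div_lt_one hp0, hqdef]; linarith
    have hΓ : 0 < Real.Gamma (1-δ) := Real.Gamma_pos_of_pos (by linarith)
    set C2 := (1/c)^(1-δ) * Real.Gamma (1-δ) with hC2def
    have hC20 : 0 < C2 := by positivity
    set C1 := CA^(q-1) with hC1def
    have hC10 : 0 < C1 := Real.rpow_pos_of_pos hCA0 _
    refine ⟨C1 * C2, by positivity, ?_⟩
    intro T a ha
    set D : ℕ → ℝ := fun j => (2:ℝ)^(p*β*(j:ℝ)) * (2:ℝ)^(-(w*(j:ℝ))) * a j ^ p with hDdef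
    have hap : ∀ j, (0:ℝ) ≤ a j ^ p := fun j => Real.rpow_nonneg (ha j) p
    have hD0 : ∀ j, 0 ≤ D j := fun j => by
      have := hap j
      positivity
    have claim : ∀ t : ℝ, t ∈ Set.Ioi (0:ℝ) →
        (∑' j : ℕ, ENNReal.ofReal
            (Real.exp (-(c * (2:ℝ) ^ (α * (j:ℝ)) * t)) *
              (2:ℝ) ^ (2 * β * (j:ℝ)) * (a j) ^ 2)) ^ q
          ≤ ENNReal.ofReal C1 *
            ∑' j : ℕ, ENNReal.ofReal
              (t ^ (-δ) * Real.exp (-(c * (2:ℝ)^(α*(j:ℝ)) * t)) * D j) := by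
      intro t ht
      have ht : (0:ℝ) < t := ht
      set E : ℕ → ℝ := fun j => Real.exp (-(c * (2:ℝ)^(α*(j:ℝ)) * t)) with hEdef
      have hE : ∀ j, 0 < E j := fun j => Real.exp_pos _
      set U : ℕ → ℝ≥0∞ := fun j => ENNReal.ofReal
        (E j ^ q⁻¹ * ((2:ℝ)^(2*β*(j:ℝ)) * a j^2 * (2:ℝ)^(-(w/q)*(j:ℝ)))) with hUdef
      set V : ℕ → ℝ≥0∞ := fun j => ENNReal.ofReal
        (E j ^ (1 - q⁻¹) * (2:ℝ)^((w/q)*(j:ℝ))) with hVdef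
      have hUV : ∀ j : ℕ, U j * V j
          = ENNReal.ofReal (E j * (2:ℝ)^(2*β*(j:ℝ)) * a j^2) := by
        intro j
        have haj := ha j
        rw [hUdef, hVdef, ← ENNReal.ofReal_mul (by positivity)]
        congr 1
        have e1 : E j ^ q⁻¹ * E j ^ (1-q⁻¹) = E j := by
          rw [← Real.rpow_add (hE j), show q⁻¹ + (1-q⁻¹) = 1 by ring, Real.rpow_one]
        have e2 : (2:ℝ)^(-(w/q)*(j:ℝ)) * (2:ℝ)^((w/q)*(j:ℝ)) = 1 := by
          rw [← Real.rpow_add two_pos, show -(w/q)*(j:ℝ) + (w/q)*(j:ℝ) = 0 by ring,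
            Real.rpow_zero]
        calc E j ^ q⁻¹ * ((2:ℝ)^(2*β*(j:ℝ)) * a j^2 * (2:ℝ)^(-(w/q)*(j:ℝ))) *
              (E j ^ (1 - q⁻¹) * (2:ℝ)^((w/q)*(j:ℝ)))
            = (E j ^ q⁻¹ * E j ^ (1-q⁻¹)) * ((2:ℝ)^(2*β*(j:ℝ)) * a j^2) *
              ((2:ℝ)^(-(w/q)*(j:ℝ)) * (2:ℝ)^((w/q)*(j:ℝ))) := by ring
          _ = E j * (2:ℝ)^(2*β*(j:ℝ)) * a j^2 := by rw [e1, e2]; ring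
      have hUq : ∀ j : ℕ, U j ^ q = ENNReal.ofReal (E j * D j) := by
        intro j
        have haj := ha j
        rw [hUdef, ENNReal.ofReal_rpow_of_nonneg (by positivity) hq0.le]
        congr 1
        have e0 : (E j ^ q⁻¹) ^ q = E j := by
          rw [← Real.rpow_mul (hE j).le, inv_mul_cancel₀ hqne, Real.rpow_one]
        have e1 : ((2:ℝ)^(2*β*(j:ℝ))) ^ q = (2:ℝ)^(p*β*(j:ℝ)) := by
          rw [← Real.rpow_mul (by norm_num : (0:ℝ) ≤ 2)]
          congr 1
          rw [hqdef]; ring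
        have e2 : ((a j)^2 : ℝ) ^ q = a j ^ p := by
          rw [← Real.rpow_natCast (a j) 2, ← Real.rpow_mul (ha j)]
          congr 1
          push_cast
          rw [hqdef]; ring
        have e3 : ((2:ℝ)^(-(w/q)*(j:ℝ))) ^ q = (2:ℝ)^(-(w*(j:ℝ))) := by
          rw [← Real.rpow_mul (by norm_num : (0:ℝ) ≤ 2)]
          congr 1
          field_simp
        rw [Real.mul_rpow (by positivity) (by positivity),
          Real.mul_rpow (by positivity) (by positivity),
          Real.mul_rpow (by positivity) (by positivity), e0, e1, e2, e3, hDdef]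
        ring
      have hVq : ∀ j : ℕ, V j ^ q' = ENNReal.ofReal ((2:ℝ)^(κ*(j:ℝ)) * E j) := by
        intro j
        rw [hVdef, ENNReal.ofReal_rpow_of_nonneg (by positivity) hqq'.symm.nonneg]
        congr 1
        have e0 : (E j ^ (1-q⁻¹)) ^ q' = E j := by
          rw [← Real.rpow_mul (hE j).le, hqq'.one_sub_inv, inv_mul_cancel₀ hqq'.symm.ne_zero,
            Real.rpow_one]
        have e1 : ((2:ℝ)^((w/q)*(j:ℝ))) ^ q' = (2:ℝ)^(κ*(j:ℝ)) := by
          rw [← Real.rpow_mul (by norm_num : (0:ℝ) ≤ 2)]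
          congr 1
          rw [hq'def, hwdef]
          field_simp
        rw [Real.mul_rpow (by positivity) (by positivity), e0, e1]
        ring
      have hB : (∑' j : ℕ, V j ^ q') ≤ ENNReal.ofReal (CA * t ^ (-(κ/α))) := by
        calc (∑' j : ℕ, V j ^ q') = ∑' j : ℕ,
            ENNReal.ofReal ((2:ℝ)^(κ*(j:ℝ)) * Real.exp (-(c * (2:ℝ)^(α*(j:ℝ)) * t))) :=
              tsum_congr fun j => hVq j
          _ ≤ _ := hCA t ht
      calc (∑' j : ℕ, ENNReal.ofReal
            (Real.exp (-(c * (2:ℝ) ^ (α * (j:ℝ)) * t)) *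
              (2:ℝ) ^ (2 * β * (j:ℝ)) * (a j) ^ 2)) ^ q
          = (∑' j : ℕ, U j * V j) ^ q := by
            congr 1
            exact tsum_congr fun j => (hUV j).symm
        _ ≤ (∑' j : ℕ, U j ^ q) * (∑' j : ℕ, V j ^ q') ^ (q-1) := holder_step hqq' U V
        _ ≤ (∑' j : ℕ, U j ^ q) * ENNReal.ofReal (CA * t ^ (-(κ/α))) ^ (q-1) :=
            mul_le_mul_right (ENNReal.rpow_le_rpow hB (by linarith)) _
        _ = (∑' j : ℕ, ENNReal.ofReal (E j * D j)) * ENNReal.ofReal (C1 * t ^ (-δ)) := by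
            congr 1
            · exact tsum_congr hUq
            · rw [ENNReal.ofReal_rpow_of_nonneg (by positivity) (by linarith : (0:ℝ) ≤ q-1)]
              congr 1
              rw [Real.mul_rpow hCA0.le (Real.rpow_nonneg ht.le _),
                ← Real.rpow_mul ht.le, hC1def]
              congr 1
              rw [hδdef, hwdef]
              field_simp
        _ = ENNReal.ofReal C1 * ∑' j : ℕ, ENNReal.ofReal (t ^ (-δ) * E j * D j) := by
            rw [ENNReal.ofReal_mul hC10.le]
            calc (∑' j : ℕ, ENNReal.ofReal (E j * D j)) *
                  (ENNReal.ofReal C1 * ENNReal.ofReal (t^(-δ)))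
                = ENNReal.ofReal C1 *
                  (ENNReal.ofReal (t^(-δ)) * ∑' j : ℕ, ENNReal.ofReal (E j * D j)) := by ring
              _ = ENNReal.ofReal C1 *
                  ∑' j : ℕ, ENNReal.ofReal (t^(-δ)) * ENNReal.ofReal (E j * D j) := by
                  rw [ENNReal.tsum_mul_left]
              _ = ENNReal.ofReal C1 * ∑' j : ℕ, ENNReal.ofReal (t ^ (-δ) * E j * D j) := by
                  congr 1
                  refine tsum_congr fun j => ?_
                  rw [mul_assoc, ← ENNReal.ofReal_mul (by positivity)]
    have hmeas : ∀ j : ℕ, Measurable fun t : ℝ =>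
        ENNReal.ofReal (t^(-δ) * Real.exp (-(c * (2:ℝ)^(α*(j:ℝ)) * t)) * D j) :=
      fun j => by fun_prop
    have hIj : ∀ j : ℕ, ∫⁻ t in Set.Ioi (0:ℝ),
        ENNReal.ofReal (t^(-δ) * Real.exp (-(c * (2:ℝ)^(α*(j:ℝ)) * t)) * D j)
        = ENNReal.ofReal C2 *
          ENNReal.ofReal ((2:ℝ)^(-(α*(j:ℝ))) * (2:ℝ)^(p*β*(j:ℝ)) * a j ^ p) := by
      intro j
      have hbj : 0 < c * (2:ℝ)^(α*(j:ℝ)) := by positivity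
      calc ∫⁻ t in Set.Ioi (0:ℝ),
            ENNReal.ofReal (t^(-δ) * Real.exp (-(c * (2:ℝ)^(α*(j:ℝ)) * t)) * D j)
          = ∫⁻ t in Set.Ioi (0:ℝ),
            ENNReal.ofReal (t^(-δ) * Real.exp (-(c * (2:ℝ)^(α*(j:ℝ)) * t))) *
              ENNReal.ofReal (D j) := by
            refine setLIntegral_congr_fun measurableSet_Ioi
              (fun t ht => ?_)
            have ht' : (0:ℝ) < t := ht
            rw [← ENNReal.ofReal_mul (by positivity)]
        _ = ENNReal.ofReal ((1/(c * (2:ℝ)^(α*(j:ℝ))))^(1-δ) * Real.Gamma (1-δ)) *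
              ENNReal.ofReal (D j) := by
            rw [lintegral_mul_const' _ _ ENNReal.ofReal_ne_top, lemB' hδ0 hδ1 hbj]
        _ = _ := by
            rw [← ENNReal.ofReal_mul (by positivity), ← ENNReal.ofReal_mul hC20.le]
            congr 1
            have f1 : (1/(c * (2:ℝ)^(α*(j:ℝ)))) = (1/c) * (2:ℝ)^(-(α*(j:ℝ))) := by
              rw [Real.rpow_neg (by norm_num : (0:ℝ) ≤ 2)]
              field_simp
            have f2 : ((1/c) * (2:ℝ)^(-(α*(j:ℝ))))^(1-δ)
                = (1/c)^(1-δ) * (2:ℝ)^(-(α*(j:ℝ))*(1-δ)) := by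
              rw [Real.mul_rpow (by positivity) (by positivity),
                ← Real.rpow_mul (by norm_num : (0:ℝ) ≤ 2)]
            have f3 : (2:ℝ)^(-(α*(j:ℝ))*(1-δ)) * (2:ℝ)^(-(w*(j:ℝ))) = (2:ℝ)^(-(α*(j:ℝ))) := by
              rw [← Real.rpow_add two_pos]
              congr 1
              linear_combination (j:ℝ) * hαδ
            calc (1/(c * (2:ℝ)^(α*(j:ℝ))))^(1-δ) * Real.Gamma (1-δ) * D j
                = ((1/c)^(1-δ) * Real.Gamma (1-δ)) *
                  (((2:ℝ)^(-(α*(j:ℝ))*(1-δ)) * (2:ℝ)^(-(w*(j:ℝ)))) *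
                    ((2:ℝ)^(p*β*(j:ℝ)) * a j ^ p)) := by
                  rw [f1, f2, hDdef]; ring
              _ = C2 * ((2:ℝ)^(-(α*(j:ℝ))) * (2:ℝ)^(p*β*(j:ℝ)) * a j ^ p) := by
                  rw [f3, hC2def]; ring
    calc ∫⁻ t in Set.Ioc (0:ℝ) T,
          (∑' j : ℕ, ENNReal.ofReal
            (Real.exp (-(c * (2:ℝ) ^ (α * (j:ℝ)) * t)) *
              (2:ℝ) ^ (2 * β * (j:ℝ)) * (a j) ^ 2)) ^ q
        ≤ ∫⁻ t in Set.Ioi (0:ℝ),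
          (∑' j : ℕ, ENNReal.ofReal
            (Real.exp (-(c * (2:ℝ) ^ (α * (j:ℝ)) * t)) *
              (2:ℝ) ^ (2 * β * (j:ℝ)) * (a j) ^ 2)) ^ q :=
          lintegral_mono_set Set.Ioc_subset_Ioi_self
      _ ≤ ∫⁻ t in Set.Ioi (0:ℝ), (ENNReal.ofReal C1 *
            ∑' j : ℕ, ENNReal.ofReal
              (t ^ (-δ) * Real.exp (-(c * (2:ℝ)^(α*(j:ℝ)) * t)) * D j)) :=
          setLIntegral_mono' measurableSet_Ioi claim
      _ = ENNReal.ofReal C1 * ∑' j : ℕ, ∫⁻ t in Set.Ioi (0:ℝ),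
            ENNReal.ofReal (t ^ (-δ) * Real.exp (-(c * (2:ℝ)^(α*(j:ℝ)) * t)) * D j) := by
          rw [lintegral_const_mul' _ _ ENNReal.ofReal_ne_top,
            lintegral_tsum fun j => (hmeas j).aemeasurable]
      _ = ENNReal.ofReal C1 * (ENNReal.ofReal C2 *
            ∑' j : ℕ, ENNReal.ofReal
              ((2:ℝ)^(-(α*(j:ℝ))) * (2:ℝ)^(p*β*(j:ℝ)) * a j ^ p)) := by
          congr 1
          rw [← ENNReal.tsum_mul_left]
          exact tsum_congr hIj
      _ = ENNReal.ofReal (C1*C2) *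
            ∑' j : ℕ, ENNReal.ofReal
              ((2:ℝ)^(-(α*(j:ℝ))) * (2:ℝ)^(p*β*(j:ℝ)) * a j ^ p) := by
          rw [ENNReal.ofReal_mul hC10.le, mul_assoc]
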